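/- Let (R,m) be a 1-dimensional Noetherian local ring and x a parameter. Then for all sufficiently large n, the limit closure (x)^lim equals (x) + (0 : x^n). -/

import Mathlib

/-- The limit closure of a single element: `(x)^lim = ⋃_{t≥1} ((x^t) : x^{t-1})`. -/
def limClosure1 {R : Type*} [CommRing R] (x : R) : Set R :=
  {r : R | ∃ t : ℕ, 1 ≤ t ∧ x ^ (t - 1) * r ∈ Ideal.span {x ^ t}}

lemma mem_colon_pow {R : Type*} [CommRing R] (x r : R) (n : ℕ) :
    r ∈ Submodule.colon (⊥ : Ideal R) (Ideal.span {x ^ n}) ↔ x ^ n * r = 0 := by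
  rw [Submodule.mem_colon]
  constructor
  · intro h
    have := h (x ^ n) (Ideal.subset_span rfl)
    simpa [smul_eq_mul, mul_comm] using this
  · intro h
    intro p hp
    rw [SetLike.mem_coe, Ideal.mem_span_singleton] at hp
    obtain ⟨c, rfl⟩ := hp
    simp only [Submodule.mem_bot, smul_eq_mul]
    rw [show r * (x ^ n * c) = c * (x ^ n * r) by ring, h, mul_zero]

/-- in a 1-dimensional Noetherian local ring, for a parameter `x`
and all sufficiently large `n`, the limit closure `(x)^lim` equals
`(x) + (0 : x^n)`. -/
theorem stmt10 {R : Type*} [CommRing R] [IsNoetherianRing R] [IsLocalRing R]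
    (hdim : ringKrullDim R = 1)
    (x : R) (hx : (Ideal.span {x}).radical = IsLocalRing.maximalIdeal R) :
    ∃ N : ℕ, ∀ n : ℕ, N ≤ n →
      limClosure1 x =
        ↑(Ideal.span {x} ⊔ Submodule.colon (⊥ : Ideal R) (Ideal.span {x ^ n})) := by
  -- the chain (0 : x^n) is monotone
  have hmono : Monotone (fun n : ℕ => Submodule.colon (⊥ : Ideal R) (Ideal.span {x ^ n})) := by
    intro a b hab
    intro r hr
    rw [mem_colon_pow] at hr ⊢
    have : x ^ b = x ^ (b - a) * x ^ a := by
      rw [← pow_add]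
      congr 1
      omega
    rw [this, mul_assoc, hr, mul_zero]
  obtain ⟨N, hN⟩ := monotone_stabilizes_iff_noetherian.mpr inferInstance
    (⟨fun n : ℕ => Submodule.colon (⊥ : Ideal R) (Ideal.span {x ^ n}), hmono⟩ : ℕ →o Ideal R)
  refine ⟨N, fun n hn => ?_⟩
  ext r
  simp only [SetLike.mem_coe]
  constructor
  · rintro ⟨t, ht1, hmem⟩
    rw [Ideal.mem_span_singleton] at hmem
    obtain ⟨c, hc⟩ := hmem
    -- x^(t-1) * (r - c*x) = 0
    have hz : x ^ (t - 1) * (r - c * x) = 0 := by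
      have : x ^ t = x ^ (t - 1) * x := by
        rw [← pow_succ]
        congr 1
        omega
      rw [mul_sub, hc, this]
      ring
    have hmem' : r - c * x ∈ Submodule.colon (⊥ : Ideal R) (Ideal.span {x ^ (t - 1)}) :=
      (mem_colon_pow x _ _).mpr hz
    have hmem'' : r - c * x ∈ Submodule.colon (⊥ : Ideal R) (Ideal.span {x ^ n}) := by
      rcases le_total (t - 1) n with h | h
      · exact hmono h hmem'
      · have e1 := hN (t - 1) (le_trans hn h)
        have e2 := hN n hn
        simp only [OrderHom.coe_mk] at e1 e2
        rw [← e1] at hmem'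
        rw [← e2]
        exact hmem'
    have : r = c * x + (r - c * x) := by ring
    rw [this]
    exact Submodule.add_mem _
      (Ideal.mem_sup_left (Ideal.mem_span_singleton.mpr ⟨c, mul_comm c x⟩))
      (Ideal.mem_sup_right hmem'')
  · intro hr
    rw [Submodule.mem_sup] at hr
    obtain ⟨a, ha, b, hb, rfl⟩ := hr
    rw [Ideal.mem_span_singleton] at ha
    obtain ⟨c, rfl⟩ := ha
    rw [mem_colon_pow] at hb
    refine ⟨n + 1, by omega, ?_⟩
    simp only [Nat.add_sub_cancel]
    rw [mul_add, hb, add_zero, Ideal.mem_span_singleton]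
    exact ⟨c, by ring⟩
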